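/- Let g : ℕ → ℕ (indexed from 1) be Golomb's sequence: the unique nondecreasing sequence of positive integers with g(1) = 1, g(2) = 2, such that for every n ≥ 1, g(n) equals the number of indices m ≥ 1 with g(m) = n. Let φ = (1 + √5)/2 be the golden ratio. Then g(n) is asymptotic to φ^{2−φ}·n^{φ−1}, i.e., the ratio g(n) / (φ^{2−φ}·n^{φ−1}) tends to 1 as n → ∞. -/

import Mathlib

/-- Golomb's sequence property: nondecreasing positive-integer sequence with
`g 1 = 1`, `g 2 = 2`, such that each value `n ≥ 1` occurs exactly `g n` times
among the terms `g m` for `m ≥ 1`. -/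
def IsGolomb (g : ℕ → ℕ) : Prop :=
  g 1 = 1 ∧ g 2 = 2 ∧ (∀ n, 1 ≤ n → 1 ≤ g n) ∧
    (∀ ⦃m n : ℕ⦄, 1 ≤ m → m ≤ n → g m ≤ g n) ∧
    ∀ n, 1 ≤ n → Nat.card {m : ℕ // 1 ≤ m ∧ g m = n} = g n


open Finset Filter


noncomputable def ph : ℝ := (1 + Real.sqrt 5) / 2
noncomputable def al : ℝ := (Real.sqrt 5 - 1) / 2
noncomputable def cc : ℝ := ph ^ (1 - al)
lemma s5_sq : Real.sqrt 5 ^ 2 = 5 := Real.sq_sqrt (by norm_num)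
lemma s5_lb : (2:ℝ) ≤ Real.sqrt 5 := by nlinarith [s5_sq, Real.sqrt_nonneg 5]
lemma s5_ub : Real.sqrt 5 ≤ 2.25 := by nlinarith [s5_sq, Real.sqrt_nonneg 5]
lemma al_pos : 0 < al := by unfold al; linarith [s5_lb]
lemma al_nonneg : 0 ≤ al := al_pos.le
lemma al_le : al ≤ 2/3 := by unfold al; linarith [s5_ub]
lemma al_lt_one : al < 1 := by linarith [al_le]
lemma ph_eq : ph = 1 + al := by unfold ph al; ring
lemma one_lt_ph : 1 < ph := by rw [ph_eq]; linarith [al_pos]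
lemma ph_pos : 0 < ph := by linarith [one_lt_ph]
lemma ph_le_two : ph ≤ 2 := by rw [ph_eq]; linarith [al_le]
lemma al_mul_ph : al * ph = 1 := by unfold al ph; nlinarith [s5_sq]
lemma ph_mul_al : ph * al = 1 := by rw [mul_comm]; exact al_mul_ph
lemma al_sq : al * al = 1 - al := by nlinarith [al_mul_ph, ph_eq]
lemma cc_pos : 0 < cc := Real.rpow_pos_of_pos ph_pos _
lemma one_le_cc : 1 ≤ cc := Real.one_le_rpow one_lt_ph.le (by linarith [al_lt_one])
lemma cc_le_two : cc ≤ 2 := by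
  have h : cc ≤ ph ^ (1:ℝ) := Real.rpow_le_rpow_of_exponent_le one_lt_ph.le (by linarith [al_pos])
  rw [Real.rpow_one] at h; linarith [ph_le_two]
lemma ph_div_cc : ph / cc = ph ^ al := by
  unfold cc
  rw [div_eq_iff (Real.rpow_pos_of_pos ph_pos _).ne', ← Real.rpow_add ph_pos]
  norm_num
lemma key_cc : (ph / cc) ^ al = cc := by
  rw [ph_div_cc, ← Real.rpow_mul ph_pos.le, al_sq]; rfl

/-- subadditivity of rpow with exponent in [0,1] -/
lemma rpow_add_le (x y : ℝ) (hx : 0 ≤ x) (hy : 0 ≤ y) :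
    (x + y) ^ al ≤ x ^ al + y ^ al := by
  lift x to NNReal using hx
  lift y to NNReal using hy
  have h := NNReal.rpow_add_le_add_rpow x y al_nonneg al_lt_one.le
  have := NNReal.coe_le_coe.mpr h
  push_cast [NNReal.coe_rpow] at this
  exact_mod_cast this

lemma rpow_8_le : (8:ℝ) ^ al ≤ 4 := by
  have h1 : (8:ℝ) ^ al ≤ (8:ℝ) ^ ((2:ℝ)/3) :=
    Real.rpow_le_rpow_of_exponent_le (by norm_num) al_le
  have h2 : (8:ℝ) ^ ((2:ℝ)/3) = 4 := by
    have : (8:ℝ) = (2:ℝ) ^ (3:ℝ) := by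
      rw [show (3:ℝ) = ((3:ℕ):ℝ) by norm_num, Real.rpow_natCast]; norm_num
    rw [this, ← Real.rpow_mul (by norm_num)]
    rw [show (3:ℝ) * (2/3) = ((2:ℕ):ℝ) by norm_num, Real.rpow_natCast]; norm_num
  linarith

lemma one_le_rpow_nat {m : ℕ} (hm : 1 ≤ m) : (1:ℝ) ≤ (m:ℝ) ^ al :=
  Real.one_le_rpow (by exact_mod_cast hm) al_nonneg

lemma phal_pow (x : ℝ) (hx : 0 ≤ x) : (x ^ ph) ^ al = x := by
  rw [← Real.rpow_mul hx, ph_mul_al, Real.rpow_one]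

lemma integral_step (x : ℝ) (hx : 0 ≤ x) :
    ∫ t in x..(x+1), t ^ al = ((x+1) ^ ph - x ^ ph) / ph := by
  rw [integral_rpow (Or.inl (by linarith [al_pos]))]
  rw [show al + 1 = ph by rw [ph_eq]; ring]

lemma step_lo (x : ℝ) (hx : 0 ≤ x) : (x+1) ^ ph - x ^ ph ≤ ph * (x+1) ^ al := by
  have hint : ∫ t in x..(x+1), t ^ al ≤ ∫ t in x..(x+1), (x+1) ^ al := by
    apply intervalIntegral.integral_mono_on (by linarith)
      (intervalIntegral.intervalIntegrable_rpow' (by linarith [al_pos]))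
      intervalIntegrable_const
    intro t ht
    exact Real.rpow_le_rpow (le_trans hx ht.1) ht.2 al_pos.le
  rw [integral_step x hx, intervalIntegral.integral_const, smul_eq_mul] at hint
  have h2 : ((x+1) ^ ph - x ^ ph) / ph ≤ (x+1) ^ al := by
    calc ((x+1) ^ ph - x ^ ph) / ph ≤ (x + 1 - x) * (x+1) ^ al := hint
    _ = (x+1) ^ al := by ring
  calc (x+1) ^ ph - x ^ ph = ph * (((x+1) ^ ph - x ^ ph) / ph) := by
        rw [mul_div_cancel₀ _ ph_pos.ne']
  _ ≤ ph * (x+1) ^ al := by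
        exact mul_le_mul_of_nonneg_left h2 ph_pos.le

lemma step_up (x : ℝ) (hx : 0 ≤ x) : ph * x ^ al ≤ (x+1) ^ ph - x ^ ph := by
  have hint : ∫ t in x..(x+1), (x:ℝ) ^ al ≤ ∫ t in x..(x+1), t ^ al := by
    apply intervalIntegral.integral_mono_on (by linarith)
      intervalIntegrable_const
      (intervalIntegral.intervalIntegrable_rpow' (by linarith [al_pos]))
    intro t ht
    exact Real.rpow_le_rpow hx ht.1 al_pos.le
  rw [integral_step x hx, intervalIntegral.integral_const, smul_eq_mul] at hint
  have h2 : x ^ al ≤ ((x+1) ^ ph - x ^ ph) / ph := by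
    calc x ^ al = (x + 1 - x) * x ^ al := by ring
    _ ≤ ((x+1) ^ ph - x ^ ph) / ph := hint
  calc ph * x ^ al ≤ ph * (((x+1) ^ ph - x ^ ph) / ph) :=
        mul_le_mul_of_nonneg_left h2 ph_pos.le
  _ = (x+1) ^ ph - x ^ ph := mul_div_cancel₀ _ ph_pos.ne'

lemma sum_up (k : ℕ) : ∑ j ∈ Finset.Icc 1 k, (j:ℝ) ^ al ≤ ((k:ℝ)+1) ^ ph / ph := by
  induction k with
  | zero =>
    simp only [Finset.Icc_self, Nat.cast_zero, zero_add]
    rw [show Finset.Icc 1 0 = ∅ from rfl]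
    simp only [Finset.sum_empty]
    rw [Real.one_rpow]
    exact div_nonneg zero_le_one ph_pos.le
  | succ k ih =>
    rw [Finset.sum_Icc_succ_top (by omega)]
    push_cast
    have hstep := step_up ((k:ℝ)+1) (by positivity)
    have : ((k:ℝ)+1) ^ al ≤ (((k:ℝ)+1+1) ^ ph - ((k:ℝ)+1) ^ ph) / ph := by
      rw [le_div_iff₀ ph_pos]; linarith [hstep]
    calc (∑ j ∈ Finset.Icc 1 k, (j:ℝ) ^ al) + ((k:ℝ)+1) ^ al
        ≤ ((k:ℝ)+1) ^ ph / ph + (((k:ℝ)+1+1) ^ ph - ((k:ℝ)+1) ^ ph) / ph := by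
          exact add_le_add ih this
    _ = ((k:ℝ)+1+1) ^ ph / ph := by ring

lemma sum_lo (k : ℕ) : (k:ℝ) ^ ph / ph ≤ ∑ j ∈ Finset.Icc 1 k, (j:ℝ) ^ al := by
  induction k with
  | zero => simp [Real.zero_rpow ph_pos.ne']
  | succ k ih =>
    rw [Finset.sum_Icc_succ_top (by omega)]
    push_cast
    have hstep := step_lo (k:ℝ) (by positivity)
    have : (((k:ℝ)+1) ^ ph - (k:ℝ) ^ ph) / ph ≤ ((k:ℝ)+1) ^ al := by
      rw [div_le_iff₀ ph_pos]; linarith [hstep]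
    calc ((k:ℝ)+1) ^ ph / ph
        = (k:ℝ) ^ ph / ph + (((k:ℝ)+1) ^ ph - (k:ℝ) ^ ph) / ph := by ring
    _ ≤ (∑ j ∈ Finset.Icc 1 k, (j:ℝ) ^ al) + ((k:ℝ)+1) ^ al := add_le_add ih this

def Gs (g : ℕ → ℕ) (k : ℕ) : ℕ := ∑ j ∈ Finset.Icc 1 k, g j

lemma Gs_zero (g : ℕ → ℕ) : Gs g 0 = 0 := by simp [Gs]
lemma Gs_succ (g : ℕ → ℕ) (n : ℕ) : Gs g (n+1) = Gs g n + g (n+1) :=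
  Finset.sum_Icc_succ_top (by omega) g

lemma Gs_mono (g : ℕ → ℕ) {k l : ℕ} (h : k ≤ l) : Gs g k ≤ Gs g l :=
  Finset.sum_le_sum_of_subset (Finset.Icc_subset_Icc_right h)

/-- a downward-closed finite subset of `[1,∞)` is an initial interval -/
lemma downward_eq_Icc (S : Set ℕ) (hfin : S.Finite)
    (h1 : ∀ m ∈ S, 1 ≤ m)
    (hdc : ∀ a b, 1 ≤ a → a ≤ b → b ∈ S → a ∈ S) : S = Set.Icc 1 S.ncard := by
  ext m
  simp only [Set.mem_Icc]
  constructor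
  · intro hm
    refine ⟨h1 m hm, ?_⟩
    have hsub : (Set.Icc 1 m) ⊆ S := fun a ha => hdc a m ha.1 ha.2 hm
    have := Set.ncard_le_ncard hsub hfin
    rw [← Finset.coe_Icc, Set.ncard_coe_finset, Nat.card_Icc] at this; omega
  · rintro ⟨h1m, hm⟩
    by_contra hm'
    have hsub : S ⊆ Set.Icc 1 (m-1) := by
      intro b hb
      refine ⟨h1 b hb, ?_⟩
      by_contra hb'
      exact hm' (hdc m b h1m (by omega) hb)
    have := Set.ncard_le_ncard hsub (Set.finite_Icc _ _)
    rw [← Finset.coe_Icc, Set.ncard_coe_finset, Nat.card_Icc] at this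
    omega

lemma Icc_one_eq_Ioc (x : ℕ) : Finset.Icc 1 x = Finset.Ioc 0 x := by
  rw [show (1:ℕ) = 0+1 from rfl, Finset.Icc_add_one_left_eq_Ioc]

section Golomb
variable {g : ℕ → ℕ} (hg : IsGolomb g)
include hg

lemma g_pos : ∀ n, 1 ≤ n → 1 ≤ g n := hg.2.2.1
lemma g_mono : ∀ ⦃m n : ℕ⦄, 1 ≤ m → m ≤ n → g m ≤ g n := hg.2.2.2.1

lemma main_iff : ∀ n m : ℕ, 1 ≤ m → (g m ≤ n ↔ m ≤ Gs g n) := by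
  intro n
  induction n with
  | zero =>
    intro m hm
    constructor
    · intro h; exact absurd (lt_of_lt_of_le (hg.2.2.1 m hm) h) (by omega)
    · intro h; rw [Gs_zero] at h; omega
  | succ n ih =>
    intro m hm
    set A : Set ℕ := {m | 1 ≤ m ∧ g m = n + 1} with hA
    have hcardA : Nat.card A = g (n+1) := by
      rw [← hg.2.2.2.2 (n+1) (by omega)]
      exact (Nat.card_coe_set_eq _).symm ▸ rfl
    have hApos : 0 < Nat.card A := by
      rw [hcardA]; exact hg.2.2.1 (n+1) (by omega)
    have hAfin : A.Finite := Set.finite_coe_iff.mp (Nat.card_pos_iff.mp hApos).2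
    set S : Set ℕ := {m | 1 ≤ m ∧ g m ≤ n + 1} with hS
    have hunion : S = (Set.Icc 1 (Gs g n)) ∪ A := by
      ext x
      simp only [Set.mem_union, Set.mem_Icc, Set.mem_setOf_eq, hS, hA]
      constructor
      · rintro ⟨hx1, hx2⟩
        rcases Nat.lt_or_ge (g x) (n+1) with h | h
        · exact Or.inl ⟨hx1, (ih x hx1).mp (by omega)⟩
        · exact Or.inr ⟨hx1, by omega⟩
      · rintro (⟨hx1, hx2⟩ | ⟨hx1, hx2⟩)
        · exact ⟨hx1, le_trans ((ih x hx1).mpr hx2) (by omega)⟩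
        · exact ⟨hx1, by omega⟩
    have hdisj : Disjoint (Set.Icc 1 (Gs g n)) A := by
      rw [Set.disjoint_left]
      rintro x ⟨hx1, hx2⟩ ⟨hx1', hx2'⟩
      have := (ih x hx1).mpr hx2
      omega
    have hSfin : S.Finite := by
      rw [hunion]; exact (Set.finite_Icc _ _).union hAfin
    have hScard : S.ncard = Gs g (n+1) := by
      rw [hunion, Set.ncard_union_eq hdisj (Set.finite_Icc _ _) hAfin,
        ← Finset.coe_Icc, Set.ncard_coe_finset, Nat.card_Icc, ← Nat.card_coe_set_eq, hcardA,
        Gs_succ]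
      omega
    have hSeq : S = Set.Icc 1 (Gs g (n+1)) := by
      rw [← hScard]
      exact downward_eq_Icc S hSfin (fun x hx => hx.1)
        (fun a b ha hab hb => ⟨ha, le_trans (hg.2.2.2.1 ha hab) hb.2⟩)
    constructor
    · intro h
      have : m ∈ S := ⟨hm, h⟩
      rw [hSeq] at this; exact this.2
    · intro h
      have : m ∈ S := by rw [hSeq]; exact ⟨hm, h⟩
      exact this.2

lemma le_Gs_self : ∀ k, k ≤ Gs g k := by
  intro k
  calc k = ∑ j ∈ Finset.Icc 1 k, 1 := by simp
  _ ≤ Gs g k := Finset.sum_le_sum (fun j hj => hg.2.2.1 j (Finset.mem_Icc.mp hj).1)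

lemma g_le_self : ∀ m, 1 ≤ m → g m ≤ m := fun m hm =>
  (main_iff hg m m hm).mpr (le_Gs_self hg m)

lemma le_Gs_g : ∀ m, 1 ≤ m → m ≤ Gs g (g m) := fun m hm =>
  (main_iff hg (g m) m hm).mp le_rfl

lemma Gs_pred_lt : ∀ m, 1 ≤ m → Gs g (g m - 1) < m := by
  intro m hm
  by_contra h
  have := (main_iff hg (g m - 1) m hm).mpr (by omega)
  have := hg.2.2.1 m hm
  omega

lemma g_ge_two : ∀ m, 2 ≤ m → 2 ≤ g m := by
  intro m hm
  have h := hg.2.2.2.1 (show (1:ℕ) ≤ 2 by norm_num) hm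
  rw [hg.2.1] at h
  omega

lemma Gs_two : Gs g 2 = 3 := by
  rw [show (2:ℕ) = 1 + 1 from rfl, Gs_succ]
  simp [Gs, hg.1, hg.2.1]

lemma g_lt_self : ∀ m, 3 ≤ m → g m < m := by
  intro m hm
  have h1 : m ≤ Gs g (m-1) := by
    have e : Gs g 2 + ∑ j ∈ Finset.Ioc 2 (m-1), g j = Gs g (m-1) := by
      unfold Gs
      rw [Icc_one_eq_Ioc, Icc_one_eq_Ioc]
      exact Finset.sum_Ioc_consecutive g (by omega) (by omega)
    have h2 : ∑ j ∈ Finset.Ioc 2 (m-1), 1 ≤ ∑ j ∈ Finset.Ioc 2 (m-1), g j :=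
      Finset.sum_le_sum (fun j hj => hg.2.2.1 j (by have := (Finset.mem_Ioc.mp hj).1; omega))
    simp only [Finset.sum_const, Nat.card_Ioc, smul_eq_mul, mul_one] at h2
    rw [Gs_two hg] at e
    omega
  have := (main_iff hg (m-1) m (by omega)).mpr h1
  omega

lemma g_unbounded : ∀ N m, Gs g N + 1 ≤ m → N + 1 ≤ g m := by
  intro N m hm
  by_contra h
  have := (main_iff hg N m (by have := le_Gs_self hg N; omega)).mp (by omega)
  omega

end Golomb
section Chains
variable {g : ℕ → ℕ}

lemma Gs_split (M k : ℕ) (h : M - 1 ≤ k) :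
    Gs g (M-1) + ∑ j ∈ Finset.Ioc (M-1) k, g j = Gs g k := by
  unfold Gs
  rw [Icc_one_eq_Ioc, Icc_one_eq_Ioc]
  exact Finset.sum_Ioc_consecutive g (Nat.zero_le _) h

lemma Ioc_subset_Icc_one (M k : ℕ) : Finset.Ioc (M-1) k ⊆ Finset.Icc 1 k := by
  intro x hx
  rw [Finset.mem_Ioc] at hx
  rw [Finset.mem_Icc]
  omega

lemma chain_up (t : ℝ) (ht : 0 ≤ t) (M k : ℕ) (hM : 1 ≤ M) (hMk : M - 1 ≤ k)
    (hb : ∀ j, M ≤ j → j ≤ k → (g j : ℝ) ≤ t * cc * (j:ℝ) ^ al) :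
    (Gs g k : ℝ) ≤ (Gs g (M-1) : ℝ) + t * cc * (((k:ℝ)+1) ^ ph / ph) := by
  have h1 : (Gs g k : ℝ) = (Gs g (M-1) : ℝ) + ∑ j ∈ Finset.Ioc (M-1) k, (g j : ℝ) := by
    rw [← Gs_split (g := g) M k hMk]; push_cast; ring
  rw [h1]
  refine add_le_add le_rfl ?_
  have htc : (0:ℝ) ≤ t * cc := mul_nonneg ht cc_pos.le
  calc ∑ j ∈ Finset.Ioc (M-1) k, (g j : ℝ)
      ≤ ∑ j ∈ Finset.Ioc (M-1) k, t * cc * (j:ℝ) ^ al := by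
        refine Finset.sum_le_sum ?_
        intro j hj
        rw [Finset.mem_Ioc] at hj
        exact hb j (by omega) hj.2
  _ = t * cc * ∑ j ∈ Finset.Ioc (M-1) k, (j:ℝ) ^ al := by rw [Finset.mul_sum]
  _ ≤ t * cc * ∑ j ∈ Finset.Icc 1 k, (j:ℝ) ^ al := by
        refine mul_le_mul_of_nonneg_left ?_ htc
        refine Finset.sum_le_sum_of_subset_of_nonneg (Ioc_subset_Icc_one M k) ?_
        intro j _ _
        positivity
  _ ≤ t * cc * (((k:ℝ)+1) ^ ph / ph) := mul_le_mul_of_nonneg_left (sum_up k) htc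

lemma chain_lo (t : ℝ) (ht : 0 ≤ t) (M k : ℕ) (hM : 1 ≤ M) (hMk : M - 1 ≤ k)
    (hb : ∀ j, M ≤ j → j ≤ k → cc * (j:ℝ) ^ al ≤ t * (g j : ℝ)) :
    cc * (((k:ℝ) ^ ph - (M:ℝ) ^ ph) / ph) ≤ t * (Gs g k : ℝ) := by
  have hsum : cc * (((k:ℝ) ^ ph - (M:ℝ) ^ ph) / ph)
      ≤ cc * ∑ j ∈ Finset.Ioc (M-1) k, (j:ℝ) ^ al := by
    refine mul_le_mul_of_nonneg_left ?_ cc_pos.le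
    have hsplit : ∑ j ∈ Finset.Icc 1 (M-1), (j:ℝ) ^ al + ∑ j ∈ Finset.Ioc (M-1) k, (j:ℝ) ^ al
        = ∑ j ∈ Finset.Icc 1 k, (j:ℝ) ^ al := by
      rw [Icc_one_eq_Ioc, Icc_one_eq_Ioc]
      exact Finset.sum_Ioc_consecutive _ (Nat.zero_le _) hMk
    have h2 : ∑ j ∈ Finset.Icc 1 (M-1), (j:ℝ) ^ al ≤ (((M-1:ℕ):ℝ)+1) ^ ph / ph := sum_up (M-1)
    have h3 : (((M-1:ℕ):ℝ)+1) = (M:ℝ) := by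
      have : ((M-1:ℕ):ℝ) = (M:ℝ) - 1 := by
        push_cast [Nat.cast_sub hM]; ring
      rw [this]; ring
    rw [h3] at h2
    have h4 := sum_lo k
    have he : ((k:ℝ) ^ ph - (M:ℝ) ^ ph) / ph = (k:ℝ) ^ ph / ph - (M:ℝ) ^ ph / ph := by ring
    rw [he]
    linarith [h2, h4, hsplit]
  have hsum2 : cc * ∑ j ∈ Finset.Ioc (M-1) k, (j:ℝ) ^ al ≤ t * (Gs g k : ℝ) := by
    calc cc * ∑ j ∈ Finset.Ioc (M-1) k, (j:ℝ) ^ al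
        = ∑ j ∈ Finset.Ioc (M-1) k, cc * (j:ℝ) ^ al := by rw [Finset.mul_sum]
    _ ≤ ∑ j ∈ Finset.Ioc (M-1) k, t * (g j : ℝ) := by
        refine Finset.sum_le_sum ?_
        intro j hj
        rw [Finset.mem_Ioc] at hj
        exact hb j (by omega) hj.2
    _ = t * ∑ j ∈ Finset.Ioc (M-1) k, (g j : ℝ) := by rw [Finset.mul_sum]
    _ ≤ t * (Gs g k : ℝ) := by
        refine mul_le_mul_of_nonneg_left ?_ ht
        have h1 : (Gs g k : ℝ) = (Gs g (M-1) : ℝ) + ∑ j ∈ Finset.Ioc (M-1) k, (g j : ℝ) := by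
          rw [← Gs_split (g := g) M k hMk]; push_cast; ring
        rw [h1]
        have : (0:ℝ) ≤ (Gs g (M-1) : ℝ) := by positivity
        linarith
  linarith

end Chains
section Crude
variable {g : ℕ → ℕ}

lemma two_rpow_le : (2:ℝ) ^ al ≤ 2 := by
  have h : (2:ℝ) ^ al ≤ (2:ℝ) ^ (1:ℝ) :=
    Real.rpow_le_rpow_of_exponent_le (by norm_num) al_lt_one.le
  rwa [Real.rpow_one] at h

lemma one_le_ccm {m : ℕ} (hm : 1 ≤ m) : (1:ℝ) ≤ cc * (m:ℝ) ^ al := by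
  have := one_le_rpow_nat hm
  nlinarith [one_le_cc]

lemma inv_rpow8_ge : (1:ℝ)/4 ≤ ((8:ℝ) ^ al)⁻¹ := by
  have h8 : (0:ℝ) < (8:ℝ) ^ al := Real.rpow_pos_of_pos (by norm_num) _
  have h := one_div_le_one_div_of_le h8 rpow_8_le
  rw [one_div ((8:ℝ) ^ al)] at h
  linarith [h]

lemma crude (hg : IsGolomb g) : ∀ m : ℕ, 1 ≤ m →
    cc * (m:ℝ) ^ al ≤ 8 * (g m : ℝ) ∧ (g m : ℝ) ≤ 8 * cc * (m:ℝ) ^ al := by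
  intro m
  induction m using Nat.strong_induction_on with
  | _ m ih =>
    intro hm
    rcases Nat.lt_or_ge m 3 with hm3 | hm3
    · interval_cases m
      · rw [hg.1]
        push_cast
        rw [Real.one_rpow]
        exact ⟨by nlinarith [cc_le_two], by nlinarith [one_le_cc]⟩
      · rw [hg.2.1]
        push_cast
        have h1 := two_rpow_le
        have h2 : (1:ℝ) ≤ (2:ℝ) ^ al := Real.one_le_rpow (by norm_num) al_nonneg
        exact ⟨by nlinarith [cc_le_two], by nlinarith [one_le_cc]⟩
    · set k := g m with hk
      have hk2 : 2 ≤ k := g_ge_two hg m (by omega)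
      have hklt : k < m := g_lt_self hg m hm3
      have hup : m ≤ Gs g k := le_Gs_g hg m (by omega)
      have hlo : Gs g (k-1) < m := Gs_pred_lt hg m (by omega)
      have hccm := one_le_ccm hm
      have hccp := cc_pos
      have hphp := ph_pos
      have hmal : (0:ℝ) ≤ (m:ℝ) ^ al := Real.rpow_nonneg (Nat.cast_nonneg m) _
      constructor
      · have hchain := chain_up (g := g) 8 (by norm_num) 1 k (le_refl 1) (by omega)
          (fun j h1 h2 => (ih j (by omega) h1).2)
        simp only [Nat.sub_self, Gs_zero, Nat.cast_zero, zero_add] at hchain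
        set Q : ℝ := ((k:ℝ)+1) ^ ph with hQ
        have h0 : (m:ℝ) ≤ 8 * cc * (Q / ph) := le_trans (by exact_mod_cast hup) hchain
        have h1 : ph * (m:ℝ) / (8 * cc) ≤ Q := by
          rw [div_le_iff₀ (by nlinarith : (0:ℝ) < 8 * cc)]
          have h := mul_le_mul_of_nonneg_right h0 hphp.le
          have e : 8 * cc * (Q / ph) * ph = 8 * cc * Q := by field_simp
          rw [e] at h
          nlinarith [h]
        have hbase : (0:ℝ) ≤ ph * (m:ℝ) / (8 * cc) :=
          div_nonneg (mul_nonneg hphp.le (Nat.cast_nonneg m)) (by nlinarith)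
        have h2 : (ph * (m:ℝ) / (8 * cc)) ^ al ≤ (k:ℝ) + 1 := by
          calc (ph * (m:ℝ) / (8 * cc)) ^ al ≤ Q ^ al :=
                Real.rpow_le_rpow hbase h1 al_nonneg
          _ = (k:ℝ) + 1 := phal_pow _ (by positivity)
        have h3 : (ph * (m:ℝ) / (8 * cc)) ^ al = cc * ((m:ℝ) ^ al * ((8:ℝ) ^ al)⁻¹) := by
          have e1 : ph * (m:ℝ) / (8 * cc) = (ph / cc) * ((m:ℝ) * (8:ℝ)⁻¹) := by
            field_simp
          rw [e1, Real.mul_rpow (div_nonneg hphp.le hccp.le)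
              (mul_nonneg (Nat.cast_nonneg m) (by norm_num)), key_cc,
            Real.mul_rpow (Nat.cast_nonneg m) (by norm_num),
            Real.inv_rpow (by norm_num : (0:ℝ) ≤ 8)]
        have h5 : cc * (m:ℝ) ^ al / 4 ≤ (k:ℝ) + 1 := by
          rw [h3] at h2
          nlinarith [h2, inv_rpow8_ge, hccp, hmal]
        have hk1 : (1:ℝ) ≤ (k:ℝ) := by exact_mod_cast (by omega : 1 ≤ k)
        linarith [h5, hk1]
      · have hchain := chain_lo (g := g) 8 (by norm_num) 1 (k-1) (le_refl 1) (by omega)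
          (fun j h1 h2 => (ih j (by omega) h1).1)
        set y : ℝ := ((k-1:ℕ):ℝ) with hy
        have hyk : y = (k:ℝ) - 1 := by
          rw [hy, Nat.cast_sub (by omega : 1 ≤ k)]; norm_num
        have hkr2 : (2:ℝ) ≤ (k:ℝ) := by exact_mod_cast hk2
        have hy0 : (0:ℝ) ≤ y := by rw [hyk]; linarith
        simp only [Nat.cast_one, Real.one_rpow] at hchain
        have hGsm : (Gs g (k-1) : ℝ) ≤ (m:ℝ) - 1 := by
          have h' : Gs g (k-1) + 1 ≤ m := hlo
          have h'' : ((Gs g (k-1) : ℝ)) + 1 ≤ (m:ℝ) := by exact_mod_cast h'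
          linarith
        set Z : ℝ := 8 * ph * (m:ℝ) / cc with hZ
        have hZ0 : (0:ℝ) ≤ Z := by
          rw [hZ]
          exact div_nonneg (by nlinarith [Nat.cast_nonneg (α := ℝ) m]) hccp.le
        have h7 : cc * ((y ^ ph - 1) / ph) ≤ 8 * ((m:ℝ) - 1) := le_trans hchain (by linarith)
        have h6 : y ^ ph ≤ Z + 1 := by
          have h7' : cc * (y ^ ph - 1) ≤ 8 * ((m:ℝ) - 1) * ph := by
            have h := mul_le_mul_of_nonneg_right h7 hphp.le
            have e : cc * ((y ^ ph - 1)/ph) * ph = cc * (y ^ ph - 1) := by field_simp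
            rw [e] at h; exact h
          have hccZ : cc * Z = 8 * ph * (m:ℝ) := by
            rw [hZ]; field_simp
          rw [← sub_le_iff_le_add, ← mul_le_mul_iff_right₀ hccp]
          calc cc * (y ^ ph - 1) ≤ 8 * ((m:ℝ) - 1) * ph := h7'
          _ ≤ 8 * ph * (m:ℝ) := by nlinarith [hphp]
          _ = cc * Z := hccZ.symm
        have h8 : y ≤ (Z + 1) ^ al := by
          calc y = (y ^ ph) ^ al := (phal_pow y hy0).symm
          _ ≤ (Z + 1) ^ al := Real.rpow_le_rpow (Real.rpow_nonneg hy0 _) h6 al_nonneg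
        have h9 : (Z + 1) ^ al ≤ Z ^ al + 1 := by
          have := rpow_add_le Z 1 hZ0 zero_le_one
          rwa [Real.one_rpow] at this
        have h10 : Z ^ al ≤ 4 * (cc * (m:ℝ) ^ al) := by
          have e1 : Z = (8:ℝ) * ((ph / cc) * (m:ℝ)) := by rw [hZ]; field_simp
          have e2 : Z ^ al = (8:ℝ) ^ al * (cc * (m:ℝ) ^ al) := by
            rw [e1, Real.mul_rpow (by norm_num)
                (mul_nonneg (div_nonneg hphp.le hccp.le) (Nat.cast_nonneg m)),
              Real.mul_rpow (div_nonneg hphp.le hccp.le) (Nat.cast_nonneg m), key_cc]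
          have hx : (0:ℝ) ≤ cc * (m:ℝ) ^ al := mul_nonneg hccp.le hmal
          rw [e2]
          exact mul_le_mul_of_nonneg_right rpow_8_le hx
        have hkr : (k:ℝ) = y + 1 := by rw [hyk]; ring
        rw [hkr, show (8:ℝ) * cc * (m:ℝ) ^ al = 8 * (cc * (m:ℝ) ^ al) from by ring]
        linarith [h8, h9, h10, hccm]
end Crude
section Improve
variable {g : ℕ → ℕ}

lemma pow_al_ge {X : ℝ} (hX : 0 ≤ X) {m : ℕ} (hm : X ^ ph ≤ (m:ℝ)) : X ≤ (m:ℝ) ^ al := by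
  calc X = (X ^ ph) ^ al := (phal_pow X hX).symm
  _ ≤ (m:ℝ) ^ al := Real.rpow_le_rpow (Real.rpow_nonneg hX _) hm al_nonneg

lemma nat_ge_ceil {X : ℝ} {m N : ℕ} (hN : ⌈X⌉₊ + 1 ≤ N) (hm : N ≤ m) : X ≤ (m:ℝ) := by
  have h1 : (⌈X⌉₊ : ℝ) ≤ (m:ℝ) := by exact_mod_cast (by omega : ⌈X⌉₊ ≤ m)
  linarith [Nat.le_ceil X]

lemma improve (hg : IsGolomb g) (t s : ℝ) (ht1 : 1 ≤ t) (ht2 : t ≤ 64) (hs : 1 < s)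
    (M : ℕ) (hM : 1 ≤ M)
    (hyp : ∀ m : ℕ, M ≤ m → cc * (m:ℝ) ^ al ≤ t * (g m : ℝ) ∧ (g m : ℝ) ≤ t * cc * (m:ℝ) ^ al) :
    ∃ M' : ℕ, 1 ≤ M' ∧ ∀ m : ℕ, M' ≤ m →
      cc * (m:ℝ) ^ al ≤ (t ^ al * s) * (g m : ℝ) ∧
        (g m : ℝ) ≤ (t ^ al * s) * cc * (m:ℝ) ^ al := by
  have hccp := cc_pos
  have hphp := ph_pos
  have ht0 : (0:ℝ) < t := by linarith
  have hs0 : (0:ℝ) < s := by linarith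
  have htal1 : (1:ℝ) ≤ t ^ al := Real.one_le_rpow ht1 al_nonneg
  have htal0 : (0:ℝ) < t ^ al := by linarith
  have htal64 : t ^ al ≤ 64 := by
    have h := Real.rpow_le_rpow_of_exponent_le ht1 al_lt_one.le
    rw [Real.rpow_one] at h; linarith
  set δ : ℝ := (1 - 1/s)/2 with hδdef
  have h1s : 1/s < 1 := by rw [div_lt_one hs0]; exact hs
  have h1s0 : 0 < 1/s := by positivity
  have hδ0 : 0 < δ := by rw [hδdef]; linarith
  have hδhalf : δ ≤ 1/2 := by rw [hδdef]; linarith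
  have hes : 1 - 2*δ = 1/s := by rw [hδdef]; ring
  set D : ℝ := (Gs g (M-1) : ℝ) with hDdef
  have hD0 : 0 ≤ D := Nat.cast_nonneg _
  clear_value δ D
  refine ⟨(Gs g M + 1) + (⌈D/δ⌉₊ + 1) + (⌈(64/δ) ^ ph⌉₊ + 1) + (⌈(((M:ℝ)+1)/(s-1)) ^ ph⌉₊ + 1),
    by omega, ?_⟩
  intro m hm
  have hm1 : Gs g M + 1 ≤ m := by omega
  have hm0 : 1 ≤ m := by omega
  have hm0' : (1:ℝ) ≤ (m:ℝ) := by exact_mod_cast hm0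
  have hmpos : (0:ℝ) < (m:ℝ) := by linarith
  have hmal0 : (0:ℝ) ≤ (m:ℝ) ^ al := Real.rpow_nonneg hmpos.le _
  have hm2 : D/δ ≤ (m:ℝ) := nat_ge_ceil (le_refl _) (by omega)
  have hDm : D ≤ δ * (m:ℝ) := by
    rw [div_le_iff₀ hδ0] at hm2; linarith
  have hm3 : 64/δ ≤ (m:ℝ) ^ al :=
    pow_al_ge (by positivity) (nat_ge_ceil (le_refl _) (by omega))
  have hm4 : ((M:ℝ)+1)/(s-1) ≤ (m:ℝ) ^ al :=
    pow_al_ge (div_nonneg (by positivity) (by linarith)) (nat_ge_ceil (le_refl _) (by omega))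
  set k := g m with hkdef
  have hkM : M + 1 ≤ k := g_unbounded hg M m hm1
  have hkr2 : (2:ℝ) ≤ (k:ℝ) := by exact_mod_cast (by omega : 2 ≤ k)
  have hmGs0 : (m:ℝ) ≤ (Gs g k : ℝ) := by exact_mod_cast le_Gs_g hg m hm0
  have hGsm0 : (Gs g (k-1) : ℝ) ≤ (m:ℝ) := by
    exact_mod_cast le_of_lt (Gs_pred_lt hg m hm0)
  have hchainU := chain_up (g := g) t ht0.le M k hM (by omega)
    (fun j hj _ => (hyp j hj).2)
  have hchainL := chain_lo (g := g) t ht0.le M (k-1) hM (by omega)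
    (fun j hj _ => (hyp j hj).1)
  clear_value k
  constructor
  · -- lower bound on g m
    obtain ⟨Q, hQ⟩ : ∃ Q : ℝ, Q = ((k:ℝ)+1) ^ ph := ⟨_, rfl⟩
    have h0 : (m:ℝ) - D ≤ t * cc * (Q / ph) := by
      rw [hQ]
      rw [← hDdef] at hchainU
      linarith [hchainU, hmGs0]
    have h1 : ph * ((m:ℝ) - D) / (t * cc) ≤ Q := by
      rw [div_le_iff₀ (by positivity : (0:ℝ) < t * cc)]
      have h := mul_le_mul_of_nonneg_right h0 hphp.le
      have e : t * cc * (Q / ph) * ph = t * cc * Q := by field_simp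
      rw [e] at h
      linarith [h]
    have hmD0 : (0:ℝ) ≤ (m:ℝ) - D := by
      have h' : δ * (m:ℝ) ≤ (1/2) * (m:ℝ) := mul_le_mul_of_nonneg_right hδhalf hmpos.le
      linarith
    have hbase : (0:ℝ) ≤ ph * ((m:ℝ) - D) / (t * cc) := by positivity
    have h2 : (ph * ((m:ℝ) - D) / (t * cc)) ^ al ≤ (k:ℝ) + 1 := by
      calc (ph * ((m:ℝ) - D) / (t * cc)) ^ al ≤ Q ^ al :=
            Real.rpow_le_rpow hbase h1 al_nonneg
      _ = (k:ℝ) + 1 := by rw [hQ]; exact phal_pow _ (by positivity)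
    have h3 : (ph * ((m:ℝ) - D) / (t * cc)) ^ al
        = cc * (((m:ℝ) - D) ^ al * (t ^ al)⁻¹) := by
      have e1 : ph * ((m:ℝ) - D) / (t * cc) = (ph / cc) * (((m:ℝ) - D) * t⁻¹) := by
        rw [div_eq_mul_inv, div_eq_mul_inv, mul_inv]; ring
      rw [e1, Real.mul_rpow (div_nonneg hphp.le hccp.le)
          (mul_nonneg hmD0 (by positivity)), key_cc,
        Real.mul_rpow hmD0 (by positivity), Real.inv_rpow ht0.le]
    have h4 : (1 - δ) * (m:ℝ) ^ al ≤ ((m:ℝ) - D) ^ al := by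
      set x : ℝ := ((m:ℝ) - D) / (m:ℝ) with hxdef
      have hx1 : x ≤ 1 := by rw [hxdef, div_le_one hmpos]; linarith
      have hx0 : 0 < x := by
        rw [hxdef]
        apply div_pos ?_ hmpos
        have h' : δ * (m:ℝ) ≤ (1/2) * (m:ℝ) := mul_le_mul_of_nonneg_right hδhalf hmpos.le
        linarith
      have e2 : (m:ℝ) - D = x * (m:ℝ) := by rw [hxdef]; field_simp
      have hxd : 1 - δ ≤ x := by
        rw [hxdef, le_div_iff₀ hmpos]; linarith [hDm]
      calc (1 - δ) * (m:ℝ) ^ al ≤ x * (m:ℝ) ^ al :=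
            mul_le_mul_of_nonneg_right hxd hmal0
      _ ≤ x ^ al * (m:ℝ) ^ al := by
            refine mul_le_mul_of_nonneg_right ?_ hmal0
            have := Real.rpow_le_rpow_of_exponent_ge hx0 hx1 al_lt_one.le
            rwa [Real.rpow_one] at this
      _ = ((m:ℝ) - D) ^ al := by
            rw [e2, Real.mul_rpow hx0.le hmpos.le]
    obtain ⟨A, hAdef⟩ : ∃ A : ℝ, A = cc * (t ^ al)⁻¹ := ⟨_, rfl⟩
    have hinvpos : (0:ℝ) < (t ^ al)⁻¹ := by positivity
    have hA0 : 0 < A := by rw [hAdef]; positivity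
    have hA64 : 1/64 ≤ A := by
      have hinv : (1:ℝ)/64 ≤ 1/(t ^ al) := one_div_le_one_div_of_le htal0 htal64
      rw [one_div (t ^ al)] at hinv
      calc (1:ℝ)/64 ≤ (t ^ al)⁻¹ := hinv
      _ = 1 * (t ^ al)⁻¹ := (one_mul _).symm
      _ ≤ cc * (t ^ al)⁻¹ := mul_le_mul_of_nonneg_right one_le_cc hinvpos.le
      _ = A := hAdef.symm
    have step1 : A * ((1 - δ) * (m:ℝ) ^ al) ≤ (k:ℝ) + 1 := by
      have e3 : cc * (((m:ℝ) - D) ^ al * (t ^ al)⁻¹) = A * (((m:ℝ) - D) ^ al) := by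
        rw [hAdef]; ring
      rw [h3, e3] at h2
      have := mul_le_mul_of_nonneg_left h4 hA0.le
      linarith
    have step3 : 1 ≤ A * (δ * (m:ℝ) ^ al) := by
      have hd64 : (64:ℝ) ≤ δ * (m:ℝ) ^ al := by
        rw [div_le_iff₀ hδ0] at hm3; linarith [hm3]
      have hprod := mul_le_mul hA64 hd64 (by norm_num) hA0.le
      linarith [hprod]
    have step2 : A * (m:ℝ) ^ al * (1/s) = A * ((1 - δ) * (m:ℝ) ^ al) - A * (δ * (m:ℝ) ^ al) := by
      rw [← hes]; ring
    have hk_ge : A * (m:ℝ) ^ al * (1/s) ≤ (k:ℝ) := by linarith [step1, step3, step2]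
    calc cc * (m:ℝ) ^ al = (t ^ al * s) * (A * (m:ℝ) ^ al * (1/s)) := by
          rw [hAdef]
          field_simp
    _ ≤ (t ^ al * s) * (k:ℝ) :=
          mul_le_mul_of_nonneg_left hk_ge (by positivity)
  · -- upper bound on g m
    obtain ⟨y, hydef⟩ : ∃ y : ℝ, y = ((k-1:ℕ):ℝ) := ⟨_, rfl⟩
    have hyk : y = (k:ℝ) - 1 := by
      rw [hydef, Nat.cast_sub (by omega : 1 ≤ k)]; norm_num
    have hy0 : (0:ℝ) ≤ y := by rw [hyk]; linarith
    rw [← hydef] at hchainL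
    have hch2 : cc * ((y ^ ph - (M:ℝ) ^ ph) / ph) ≤ t * (m:ℝ) :=
      le_trans hchainL (mul_le_mul_of_nonneg_left hGsm0 ht0.le)
    have h6' : cc * (y ^ ph - (M:ℝ) ^ ph) ≤ t * (m:ℝ) * ph := by
      have h := mul_le_mul_of_nonneg_right hch2 hphp.le
      have e : cc * ((y ^ ph - (M:ℝ) ^ ph) / ph) * ph = cc * (y ^ ph - (M:ℝ) ^ ph) := by
        field_simp
      rw [e] at h; exact h
    have h6 : y ^ ph ≤ t * ph * (m:ℝ) / cc + (M:ℝ) ^ ph := by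
      rw [← sub_le_iff_le_add, le_div_iff₀ hccp]
      linarith [h6']
    have hZ0 : (0:ℝ) ≤ t * ph * (m:ℝ) / cc := by positivity
    have hMph0 : (0:ℝ) ≤ (M:ℝ) ^ ph := Real.rpow_nonneg (Nat.cast_nonneg M) _
    have h7 : y ≤ (t * ph * (m:ℝ) / cc) ^ al + (M:ℝ) := by
      calc y = (y ^ ph) ^ al := (phal_pow y hy0).symm
      _ ≤ (t * ph * (m:ℝ) / cc + (M:ℝ) ^ ph) ^ al :=
            Real.rpow_le_rpow (Real.rpow_nonneg hy0 _) h6 al_nonneg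
      _ ≤ (t * ph * (m:ℝ) / cc) ^ al + ((M:ℝ) ^ ph) ^ al := rpow_add_le _ _ hZ0 hMph0
      _ = (t * ph * (m:ℝ) / cc) ^ al + (M:ℝ) := by rw [phal_pow _ (Nat.cast_nonneg M)]
    have h8 : (t * ph * (m:ℝ) / cc) ^ al = t ^ al * (cc * (m:ℝ) ^ al) := by
      have e1 : t * ph * (m:ℝ) / cc = t * ((ph / cc) * (m:ℝ)) := by field_simp
      rw [e1, Real.mul_rpow ht0.le
          (mul_nonneg (div_nonneg hphp.le hccp.le) (Nat.cast_nonneg m)),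
        Real.mul_rpow (div_nonneg hphp.le hccp.le) (Nat.cast_nonneg m), key_cc]
    have h9 : (M:ℝ) + 1 ≤ (t ^ al * cc) * ((m:ℝ) ^ al * (s-1)) := by
      have hs1 : 0 < s - 1 := by linarith
      rw [div_le_iff₀ hs1] at hm4
      have htc1 : (1:ℝ) ≤ t ^ al * cc := by
        have := mul_le_mul htal1 one_le_cc zero_le_one htal0.le
        linarith
      have hX0 : (0:ℝ) ≤ (m:ℝ) ^ al * (s-1) := mul_nonneg hmal0 hs1.le
      have hprod := mul_le_mul_of_nonneg_right htc1 hX0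
      rw [one_mul] at hprod
      linarith [hm4, hprod]
    have hky : (k:ℝ) = y + 1 := by rw [hyk]; ring
    have efin : (t ^ al * s) * cc * (m:ℝ) ^ al
        = t ^ al * (cc * (m:ℝ) ^ al) + (t ^ al * cc) * ((m:ℝ) ^ al * (s-1)) := by ring
    rw [hky, efin]
    rw [h8] at h7
    linarith [h7, h9]
end Improve
section Final
variable {g : ℕ → ℕ}

lemma iterate_bound (hg : IsGolomb g) (s : ℝ) (hs1 : 1 < s) (hs2 : s ≤ 2) :
    ∀ i : ℕ, ∃ t : ℝ, 1 ≤ t ∧ t ≤ (8:ℝ) ^ (al ^ i) * s ^ 3 ∧ t ≤ 64 ∧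
      ∃ M : ℕ, 1 ≤ M ∧ ∀ m : ℕ, M ≤ m →
        cc * (m:ℝ) ^ al ≤ t * (g m : ℝ) ∧ (g m : ℝ) ≤ t * cc * (m:ℝ) ^ al := by
  have hs0 : (0:ℝ) < s := by linarith
  intro i
  induction i with
  | zero =>
    refine ⟨8, by norm_num, ?_, by norm_num, 1, le_refl 1, fun m hm => crude hg m hm⟩
    rw [pow_zero, Real.rpow_one]
    have hs3 : (1:ℝ) ≤ s ^ 3 := one_le_pow₀ hs1.le
    nlinarith
  | succ i ih =>
    obtain ⟨t, ht1, htb, ht64, M, hM, hyp⟩ := ih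
    obtain ⟨M', hM', hyp'⟩ := improve hg t s ht1 ht64 hs1 M hM hyp
    refine ⟨t ^ al * s, ?_, ?_, ?_, M', hM', hyp'⟩
    · have h1 : (1:ℝ) ≤ t ^ al := Real.one_le_rpow ht1 al_nonneg
      nlinarith
    · have ht0 : (0:ℝ) ≤ t := by linarith
      have h1 : t ^ al ≤ ((8:ℝ) ^ (al ^ i) * s ^ 3) ^ al :=
        Real.rpow_le_rpow ht0 htb al_nonneg
      have h2 : ((8:ℝ) ^ (al ^ i) * s ^ 3) ^ al
          = (8:ℝ) ^ (al ^ (i+1)) * s ^ (3 * al) := by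
        rw [Real.mul_rpow (Real.rpow_nonneg (by norm_num) _) (by positivity),
          ← Real.rpow_natCast s 3, ← Real.rpow_mul (by norm_num : (0:ℝ) ≤ 8),
          ← Real.rpow_mul hs0.le, ← pow_succ]
        norm_num
      have h3 : s ^ (3 * al) * s ≤ s ^ (3:ℝ) := by
        have e : s ^ (3 * al) * s = s ^ (3 * al + 1) := by
          rw [Real.rpow_add hs0, Real.rpow_one]
        rw [e]
        exact Real.rpow_le_rpow_of_exponent_le hs1.le (by linarith [al_le])
      have h4 : s ^ (3:ℝ) = s ^ (3:ℕ) := Real.rpow_natCast s 3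
      have h80 : (0:ℝ) ≤ (8:ℝ) ^ (al ^ (i+1)) := Real.rpow_nonneg (by norm_num) _
      calc t ^ al * s ≤ ((8:ℝ) ^ (al ^ (i+1)) * s ^ (3 * al)) * s := by
            rw [← h2]; exact mul_le_mul_of_nonneg_right h1 hs0.le
      _ = (8:ℝ) ^ (al ^ (i+1)) * (s ^ (3 * al) * s) := by ring
      _ ≤ (8:ℝ) ^ (al ^ (i+1)) * s ^ (3:ℝ) := mul_le_mul_of_nonneg_left h3 h80
      _ = (8:ℝ) ^ (al ^ (i+1)) * s ^ 3 := by rw [h4]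
    · have h1 : t ^ al ≤ (64:ℝ) ^ al := Real.rpow_le_rpow (by linarith) ht64 al_nonneg
      have h2 : (64:ℝ) ^ al ≤ 16 := by
        have h := Real.rpow_le_rpow_of_exponent_le (by norm_num : (1:ℝ) ≤ 64) al_le
        have h2' : (64:ℝ) ^ ((2:ℝ)/3) = 16 := by
          have e : (64:ℝ) = (4:ℝ) ^ (3:ℝ) := by
            rw [show (3:ℝ) = ((3:ℕ):ℝ) by norm_num, Real.rpow_natCast]; norm_num
          rw [e, ← Real.rpow_mul (by norm_num)]
          rw [show (3:ℝ) * (2/3) = ((2:ℕ):ℝ) by norm_num, Real.rpow_natCast]; norm_num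
        linarith [h, h2'.le, h2'.ge]
      have h3 : (0:ℝ) < t ^ al := Real.rpow_pos_of_pos (by linarith) _
      nlinarith
end Final
lemma exists_pow8_le (w : ℝ) (hw : 1 < w) : ∃ i : ℕ, (8:ℝ) ^ (al ^ i) ≤ w := by
  have hl8 : 0 < Real.log 8 := Real.log_pos (by norm_num)
  have hlw : 0 < Real.log w := Real.log_pos hw
  obtain ⟨i, hi⟩ := exists_pow_lt_of_lt_one (div_pos hlw hl8) al_lt_one
  refine ⟨i, ?_⟩
  have h8 : (8:ℝ) ^ (al ^ i) < (8:ℝ) ^ (Real.log w / Real.log 8) :=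
    Real.rpow_lt_rpow_of_exponent_lt (by norm_num : (1:ℝ) < 8) hi
  have he : (8:ℝ) ^ (Real.log w / Real.log 8) = w := by
    rw [Real.rpow_def_of_pos (by norm_num : (0:ℝ) < 8), mul_comm,
      div_mul_cancel₀ _ hl8.ne']
    exact Real.exp_log (by linarith)
  linarith

theorem golomb_asymptotics (g : ℕ → ℕ) (hg : IsGolomb g) :
    Filter.Tendsto
      (fun n : ℕ =>
        (g n : ℝ) / (((1 + Real.sqrt 5) / 2) ^ (2 - (1 + Real.sqrt 5) / 2) *
          (n : ℝ) ^ ((1 + Real.sqrt 5) / 2 - 1)))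
      Filter.atTop (nhds 1) := by
  have hfun : ∀ n : ℕ, ((1 + Real.sqrt 5) / 2) ^ (2 - (1 + Real.sqrt 5) / 2) *
      (n:ℝ) ^ ((1 + Real.sqrt 5) / 2 - 1) = cc * (n:ℝ) ^ al := by
    intro n
    rw [show (2 - (1 + Real.sqrt 5) / 2 : ℝ) = 1 - al by unfold al; ring,
        show ((1 + Real.sqrt 5) / 2 - 1 : ℝ) = al by unfold al; ring]
    rfl
  have heq : (fun n : ℕ => (g n : ℝ) / (((1 + Real.sqrt 5) / 2) ^ (2 - (1 + Real.sqrt 5) / 2) *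
      (n : ℝ) ^ ((1 + Real.sqrt 5) / 2 - 1)))
      = fun n : ℕ => (g n : ℝ) / (cc * (n:ℝ) ^ al) := funext fun n => by rw [hfun n]
  rw [heq, Metric.tendsto_atTop]
  intro ε hε
  have hε'0 : 0 < min ε 1 := lt_min hε one_pos
  have hε'1 : min ε 1 ≤ 1 := min_le_right _ _
  have hε'ε : min ε 1 ≤ ε := min_le_left _ _
  set ε' := min ε 1 with hε'def
  clear_value ε'
  set u : ℝ := 1 + ε'/2 with hudef
  have hu1 : 1 < u := by rw [hudef]; linarith
  have hu2 : u ≤ 2 := by rw [hudef]; linarith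
  have hu0 : 0 < u := by linarith
  clear_value u
  have hw1 : 1 < u ^ ((1:ℝ)/2) := by
    have h := Real.rpow_lt_rpow_of_exponent_lt hu1 (show (0:ℝ) < 1/2 by norm_num)
    rwa [Real.rpow_zero] at h
  have hs1 : 1 < u ^ ((1:ℝ)/6) := by
    have h := Real.rpow_lt_rpow_of_exponent_lt hu1 (show (0:ℝ) < 1/6 by norm_num)
    rwa [Real.rpow_zero] at h
  have hs2 : u ^ ((1:ℝ)/6) ≤ 2 := by
    have h := Real.rpow_le_rpow_of_exponent_le hu1.le (show (1:ℝ)/6 ≤ 1 by norm_num)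
    rw [Real.rpow_one] at h; linarith
  have hs3 : (u ^ ((1:ℝ)/6)) ^ 3 = u ^ ((1:ℝ)/2) := by
    rw [← Real.rpow_natCast (u ^ ((1:ℝ)/6)) 3, ← Real.rpow_mul hu0.le]
    norm_num
  obtain ⟨i, hi⟩ := exists_pow8_le (u ^ ((1:ℝ)/2)) hw1
  obtain ⟨t, ht1, htb, ht64, M, hM, hyp⟩ := iterate_bound hg (u ^ ((1:ℝ)/6)) hs1 hs2 i
  have htu : t ≤ u := by
    have h1 : (8:ℝ) ^ (al ^ i) * (u ^ ((1:ℝ)/6)) ^ 3 ≤ u ^ ((1:ℝ)/2) * u ^ ((1:ℝ)/2) := by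
      rw [hs3]; exact mul_le_mul_of_nonneg_right hi (Real.rpow_nonneg hu0.le _)
    have h2 : u ^ ((1:ℝ)/2) * u ^ ((1:ℝ)/2) = u := by
      rw [← Real.rpow_add hu0]; norm_num
    linarith
  refine ⟨M, fun n hn => ?_⟩
  obtain ⟨hlo, hhi⟩ := hyp n hn
  have hX1 : (1:ℝ) ≤ cc * (n:ℝ) ^ al := one_le_ccm (le_trans hM hn)
  have hX0 : (0:ℝ) < cc * (n:ℝ) ^ al := by linarith
  have ht0 : (0:ℝ) < t := by linarith
  have hup : (g n : ℝ) / (cc * (n:ℝ) ^ al) ≤ t := by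
    rw [div_le_iff₀ hX0]; linarith [hhi]
  have hdown : 1/t ≤ (g n : ℝ) / (cc * (n:ℝ) ^ al) := by
    rw [div_le_div_iff₀ ht0 hX0]; linarith [hlo]
  have h1u : 1 - ε'/2 ≤ 1/u := by
    rw [le_div_iff₀ hu0, hudef]; nlinarith [hε'0]
  have h1t : 1 - ε'/2 ≤ 1/t := le_trans h1u (one_div_le_one_div_of_le ht0 htu)
  rw [Real.dist_eq, abs_lt]
  constructor
  · have : (g n : ℝ) / (cc * (n:ℝ) ^ al) ≥ 1 - ε'/2 := le_trans h1t hdown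
    nlinarith [hε'0, hε'ε]
  · have : (g n : ℝ) / (cc * (n:ℝ) ^ al) ≤ u := le_trans hup htu
    rw [hudef] at this
    nlinarith [hε'0, hε'ε]
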